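/- Let L, M, K be positive integers and let Θ₁, …, Θ_L be mutually independent random M×K matrices such that, almost surely, every column of every Θ_l has nonnegative entries summing to 1. Suppose that for every l, E[(Θ_l)ᵀ·Θ_l] = a·1_K·1_Kᵀ + c₁·I_K, where 0 ≤ a ≤ 1 and 0 < c₁ < 1 are constants, and set c₂ := K·a + c₁. Let Θ ∈ R^{(L·M)×K} be the matrix obtained by stacking Θ₁, …, Θ_L vertically. Then: (i) P( σ_K(Θ)² ≥ c₁·L/2 ) ≥ 1 − K·exp(−c₁²·L/(80·K²)); (ii) P( σ₁(Θ)² ≤ 3·c₂·L/2 ) ≥ 1 − K·exp(−c₁²·L/(80·K²)); and (iii) P( σ_K(Θ) > 0 and σ₁(Θ)²/σ_K(Θ)² ≤ 3·c₂/c₁ ) ≥ 1 − 2·K·exp(−c₁²·L/(80·K²)). -/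

import Mathlib

open scoped BigOperators
open MeasureTheory ProbabilityTheory Matrix

/-- Euclidean (ℓ2) norm of a finite real vector. -/
noncomputable def vecNorm2 {n : ℕ} (v : Fin n → ℝ) : ℝ :=
  Real.sqrt (∑ j, (v j) ^ 2)

/-- `singVal A k` is the `k`-th largest singular value of `A` (1-indexed),
via the Courant–Fischer max-min characterization. -/
noncomputable def singVal {m n : ℕ} (A : Matrix (Fin m) (Fin n) ℝ) (k : ℕ) : ℝ :=
  sSup {r : ℝ | ∃ W : Submodule ℝ (Fin n → ℝ), Module.finrank ℝ W = k ∧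
      ∀ x ∈ W, r * vecNorm2 x ≤ vecNorm2 (A.mulVec x)}

lemma vecNorm2_nonneg {n : ℕ} (v : Fin n → ℝ) : 0 ≤ vecNorm2 v := Real.sqrt_nonneg _

lemma vecNorm2_pos {n : ℕ} {v : Fin n → ℝ} (hv : v ≠ 0) : 0 < vecNorm2 v := by
  obtain ⟨j, hj⟩ : ∃ j, v j ≠ 0 := by
    by_contra h
    push_neg at h
    exact hv (funext h)
  apply Real.sqrt_pos.2
  have h1 : 0 < (v j) ^ 2 := by positivity
  have h2 : (v j) ^ 2 ≤ ∑ i, (v i) ^ 2 :=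
    Finset.single_le_sum (f := fun i => (v i)^2) (fun i _ => sq_nonneg _) (Finset.mem_univ j)
  linarith

lemma vecNorm2_mulVec_le {m n : ℕ} (A : Matrix (Fin m) (Fin n) ℝ) (x : Fin n → ℝ) :
    vecNorm2 (A.mulVec x) ≤ Real.sqrt (∑ i, ∑ j, A i j ^ 2) * vecNorm2 x := by
  rw [vecNorm2, vecNorm2, ← Real.sqrt_mul (by positivity)]
  apply Real.sqrt_le_sqrt
  have h1 : ∀ i : Fin m, (A.mulVec x i) ^ 2 ≤ (∑ j, A i j ^ 2) * ∑ j, x j ^ 2 := by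
    intro i
    have : A.mulVec x i = ∑ j, A i j * x j := by
      simp [Matrix.mulVec, dotProduct]
    rw [this]
    exact Finset.sum_mul_sq_le_sq_mul_sq _ _ _
  calc ∑ i, (A.mulVec x i) ^ 2 ≤ ∑ i, (∑ j, A i j ^ 2) * ∑ j, x j ^ 2 :=
        Finset.sum_le_sum fun i _ => h1 i
    _ = (∑ i, ∑ j, A i j ^ 2) * ∑ j, x j ^ 2 := by rw [Finset.sum_mul]

lemma singVal_set_bddAbove {m n : ℕ} (A : Matrix (Fin m) (Fin n) ℝ) {k : ℕ} (hk : 0 < k) :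
    BddAbove {r : ℝ | ∃ W : Submodule ℝ (Fin n → ℝ), Module.finrank ℝ W = k ∧
      ∀ x ∈ W, r * vecNorm2 x ≤ vecNorm2 (A.mulVec x)} := by
  refine ⟨Real.sqrt (∑ i, ∑ j, A i j ^ 2), ?_⟩
  rintro r ⟨W, hW, hr⟩
  have hWbot : W ≠ ⊥ := by
    intro h
    rw [h, finrank_bot] at hW
    omega
  obtain ⟨x, hxW, hx0⟩ := Submodule.exists_mem_ne_zero_of_ne_bot hWbot
  have h1 : r * vecNorm2 x ≤ vecNorm2 (A.mulVec x) := hr x hxW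
  have h2 := vecNorm2_mulVec_le A x
  have hpos := vecNorm2_pos hx0
  nlinarith [h1.trans h2]

lemma le_singVal_full {m n : ℕ} (hn : 0 < n) (A : Matrix (Fin m) (Fin n) ℝ) {β : ℝ}
    (hβ : 0 ≤ β) (h : ∀ x : Fin n → ℝ, β * ∑ j, x j ^ 2 ≤ ∑ i, (A.mulVec x i) ^ 2) :
    Real.sqrt β ≤ singVal A n ∧ β ≤ singVal A n ^ 2 := by
  have hmem : Real.sqrt β ∈ {r : ℝ | ∃ W : Submodule ℝ (Fin n → ℝ), Module.finrank ℝ W = n ∧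
      ∀ x ∈ W, r * vecNorm2 x ≤ vecNorm2 (A.mulVec x)} := by
    refine ⟨⊤, ?_, ?_⟩
    · rw [finrank_top]
      exact Module.finrank_fin_fun ℝ
    · intro x _
      rw [vecNorm2, vecNorm2, ← Real.sqrt_mul hβ]
      exact Real.sqrt_le_sqrt (h x)
  have hle : Real.sqrt β ≤ singVal A n := le_csSup (singVal_set_bddAbove A hn) hmem
  refine ⟨hle, ?_⟩
  calc β = Real.sqrt β ^ 2 := (Real.sq_sqrt hβ).symm
    _ ≤ singVal A n ^ 2 := by
        apply pow_le_pow_left₀ (Real.sqrt_nonneg _) hle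

lemma singVal_one_sq_le {m n : ℕ} (hn : 0 < n) (A : Matrix (Fin m) (Fin n) ℝ) {γ : ℝ}
    (hγ : 0 ≤ γ) (h : ∀ x : Fin n → ℝ, ∑ i, (A.mulVec x i) ^ 2 ≤ γ * ∑ j, x j ^ 2) :
    singVal A 1 ^ 2 ≤ γ := by
  set e : Fin n → ℝ := Pi.single ⟨0, hn⟩ 1 with he
  have he0 : e ≠ 0 := by
    intro h0
    have : e ⟨0, hn⟩ = 0 := by rw [h0]; rfl
    rw [he, Pi.single_eq_same] at this
    norm_num at this
  have hzero : (0 : ℝ) ∈ {r : ℝ | ∃ W : Submodule ℝ (Fin n → ℝ), Module.finrank ℝ W = 1 ∧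
      ∀ x ∈ W, r * vecNorm2 x ≤ vecNorm2 (A.mulVec x)} := by
    refine ⟨Submodule.span ℝ {e}, finrank_span_singleton he0, ?_⟩
    intro x _
    rw [zero_mul]
    exact vecNorm2_nonneg _
  have h0le : (0:ℝ) ≤ singVal A 1 := le_csSup (singVal_set_bddAbove A one_pos) hzero
  have hle : singVal A 1 ≤ Real.sqrt γ := by
    apply csSup_le ⟨0, hzero⟩
    rintro r ⟨W, hW, hr⟩
    have hWbot : W ≠ ⊥ := by
      intro hb
      rw [hb, finrank_bot] at hW
      omega
    obtain ⟨x, hxW, hx0⟩ := Submodule.exists_mem_ne_zero_of_ne_bot hWbot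
    have h1 : r * vecNorm2 x ≤ vecNorm2 (A.mulVec x) := hr x hxW
    have h2 : vecNorm2 (A.mulVec x) ≤ Real.sqrt γ * vecNorm2 x := by
      rw [vecNorm2, vecNorm2, ← Real.sqrt_mul hγ]
      exact Real.sqrt_le_sqrt (h x)
    have hpos := vecNorm2_pos hx0
    nlinarith [h1.trans h2]
  calc singVal A 1 ^ 2 ≤ Real.sqrt γ ^ 2 := by apply pow_le_pow_left₀ h0le hle
    _ = γ := Real.sq_sqrt hγ

lemma quad_identity {m n : ℕ} (A : Matrix (Fin m) (Fin n) ℝ) (x : Fin n → ℝ) :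
    ∑ i, (A.mulVec x i) ^ 2 = ∑ k, ∑ k', x k * x k' * ∑ i, A i k * A i k' := by
  have h1 : ∀ i, (A.mulVec x i) ^ 2 = ∑ k, ∑ k', (A i k * x k) * (A i k' * x k') := by
    intro i
    have : A.mulVec x i = ∑ k, A i k * x k := by
      simp [Matrix.mulVec, dotProduct]
    rw [this, sq, Finset.sum_mul_sum]
  calc ∑ i, (A.mulVec x i) ^ 2 = ∑ i, ∑ k, ∑ k', (A i k * x k) * (A i k' * x k') :=
        Finset.sum_congr rfl fun i _ => h1 i
    _ = ∑ k, ∑ i, ∑ k', (A i k * x k) * (A i k' * x k') := Finset.sum_comm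
    _ = ∑ k, ∑ k', ∑ i, (A i k * x k) * (A i k' * x k') :=
        Finset.sum_congr rfl fun k _ => Finset.sum_comm
    _ = ∑ k, ∑ k', x k * x k' * ∑ i, A i k * A i k' := by
        refine Finset.sum_congr rfl fun k _ => Finset.sum_congr rfl fun k' _ => ?_
        rw [Finset.mul_sum]
        exact Finset.sum_congr rfl fun i _ => by ring

lemma abs_sum_sq_bound {K : ℕ} (x : Fin K → ℝ) (t : ℝ) (ht : 0 ≤ t) :
    ∑ k, ∑ k', t * (|x k| * |x k'|) ≤ t * (K * ∑ j, x j ^ 2) := by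
  have h1 : ∑ k, ∑ k', t * (|x k| * |x k'|) = t * (∑ k, |x k|) ^ 2 := by
    rw [sq, Finset.sum_mul_sum, Finset.mul_sum]
    simp_rw [Finset.mul_sum]
  rw [h1]
  apply mul_le_mul_of_nonneg_left _ ht
  have h2 := sq_sum_le_card_mul_sum_sq (s := Finset.univ) (f := fun j : Fin K => |x j|)
  simpa [sq_abs] using h2

lemma quad_mean {K : ℕ} (A C : ℝ) (x : Fin K → ℝ) :
    ∑ k, ∑ k', x k * x k' * (A + if k = k' then C else 0)
      = A * (∑ j, x j) ^ 2 + C * ∑ j, x j ^ 2 := by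
  have h1 : ∀ k : Fin K, ∑ k', x k * x k' * (A + if k = k' then C else 0)
      = A * (x k * ∑ j, x j) + C * (x k * x k) := by
    intro k
    have : ∀ k' : Fin K, x k * x k' * (A + if k = k' then C else 0)
        = A * (x k * x k') + (if k' = k then C * (x k * x k) else 0) := by
      intro k'
      by_cases h : k = k'
      · subst h
        simp [mul_comm]
        ring
      · rw [if_neg h, if_neg (Ne.symm h)]
        ring
    rw [Finset.sum_congr rfl fun k' _ => this k', Finset.sum_add_distrib,
      Finset.sum_ite_eq' Finset.univ k (fun _ => C * (x k * x k))]
    simp [Finset.mul_sum]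
  rw [Finset.sum_congr rfl fun k _ => h1 k, Finset.sum_add_distrib]
  congr 1
  · rw [← Finset.mul_sum, ← Finset.sum_mul, sq]
  · rw [← Finset.mul_sum]
    congr 1
    exact Finset.sum_congr rfl fun k _ => by ring

lemma quad_split {K : ℕ} (S : Fin K → Fin K → ℝ) (A C : ℝ) (x : Fin K → ℝ) :
    ∑ k, ∑ k', x k * x k' * S k k'
      = (A * (∑ j, x j) ^ 2 + C * ∑ j, x j ^ 2)
        + ∑ k, ∑ k', x k * x k' * (S k k' - (A + if k = k' then C else 0)) := by
  rw [← quad_mean A C x, ← Finset.sum_add_distrib]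
  refine Finset.sum_congr rfl fun k _ => ?_
  rw [← Finset.sum_add_distrib]
  exact Finset.sum_congr rfl fun k' _ => by ring

lemma quad_lower {K : ℕ} (S : Fin K → Fin K → ℝ) (A C t : ℝ) (hA : 0 ≤ A) (ht : 0 ≤ t)
    (hdiag : ∀ k, -t ≤ S k k - (A + C))
    (hoff : ∀ k k', k ≠ k' → |S k k' - A| ≤ t) (x : Fin K → ℝ) :
    (C - K * t) * ∑ j, x j ^ 2 ≤ ∑ k, ∑ k', x k * x k' * S k k' := by
  have hterm : ∀ k k', -(t * (|x k| * |x k'|))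
      ≤ x k * x k' * (S k k' - (A + if k = k' then C else 0)) := by
    intro k k'
    by_cases h : k = k'
    · subst h
      rw [if_pos rfl]
      have h1 := hdiag k
      have h2 : |x k| * |x k| = x k * x k := abs_mul_abs_self _
      nlinarith [mul_nonneg (abs_nonneg (x k)) (abs_nonneg (x k))]
    · rw [if_neg h, add_zero]
      have h1 := hoff k k' h
      have h2 : |x k * x k' * (S k k' - A)| ≤ |x k| * |x k'| * t := by
        rw [abs_mul, abs_mul]
        exact mul_le_mul_of_nonneg_left h1 (by positivity)
      have h3 := neg_abs_le (x k * x k' * (S k k' - A))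
      linarith
  have hdelta : -(t * (K * ∑ j, x j ^ 2))
      ≤ ∑ k, ∑ k', x k * x k' * (S k k' - (A + if k = k' then C else 0)) := by
    have hsum : ∑ k, ∑ k', -(t * (|x k| * |x k'|))
        ≤ ∑ k, ∑ k', x k * x k' * (S k k' - (A + if k = k' then C else 0)) :=
      Finset.sum_le_sum fun k _ => Finset.sum_le_sum fun k' _ => hterm k k'
    have heq : ∑ k, ∑ k', -(t * (|x k| * |x k'|))
        = -(∑ k, ∑ k', t * (|x k| * |x k'|)) := by
      rw [← Finset.sum_neg_distrib]
      refine Finset.sum_congr rfl fun k _ => ?_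
      rw [← Finset.sum_neg_distrib]
    rw [heq] at hsum
    have := abs_sum_sq_bound x t ht
    linarith
  rw [quad_split S A C x]
  nlinarith [sq_nonneg (∑ j, x j)]

lemma quad_upper {K : ℕ} (S : Fin K → Fin K → ℝ) (A C t : ℝ) (hA : 0 ≤ A) (ht : 0 ≤ t)
    (hdiag : ∀ k, S k k - (A + C) ≤ t)
    (hoff : ∀ k k', k ≠ k' → |S k k' - A| ≤ t) (x : Fin K → ℝ) :
    ∑ k, ∑ k', x k * x k' * S k k' ≤ (A * K + C + K * t) * ∑ j, x j ^ 2 := by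
  have hterm : ∀ k k', x k * x k' * (S k k' - (A + if k = k' then C else 0))
      ≤ t * (|x k| * |x k'|) := by
    intro k k'
    by_cases h : k = k'
    · subst h
      rw [if_pos rfl]
      have h1 := hdiag k
      have h2 : |x k| * |x k| = x k * x k := abs_mul_abs_self _
      nlinarith [mul_nonneg (abs_nonneg (x k)) (abs_nonneg (x k))]
    · rw [if_neg h, add_zero]
      have h1 := hoff k k' h
      have h2 : |x k * x k' * (S k k' - A)| ≤ |x k| * |x k'| * t := by
        rw [abs_mul, abs_mul]
        exact mul_le_mul_of_nonneg_left h1 (by positivity)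
      have h3 := le_abs_self (x k * x k' * (S k k' - A))
      linarith
  have hdelta : ∑ k, ∑ k', x k * x k' * (S k k' - (A + if k = k' then C else 0))
      ≤ t * (K * ∑ j, x j ^ 2) := by
    have hsum : ∑ k, ∑ k', x k * x k' * (S k k' - (A + if k = k' then C else 0))
        ≤ ∑ k, ∑ k', t * (|x k| * |x k'|) :=
      Finset.sum_le_sum fun k _ => Finset.sum_le_sum fun k' _ => hterm k k'
    exact hsum.trans (abs_sum_sq_bound x t ht)
  rw [quad_split S A C x]
  have hsq : (∑ j, x j) ^ 2 ≤ K * ∑ j, x j ^ 2 := by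
    have := sq_sum_le_card_mul_sum_sq (s := Finset.univ) (f := fun j : Fin K => x j)
    simpa using this
  nlinarith [sq_nonneg (∑ j, x j)]

lemma exp_le_cosh_add {lam y : ℝ} (hy : |y| ≤ 1) :
    Real.exp (lam * y) ≤ Real.cosh lam + y * Real.sinh lam := by
  rw [abs_le] at hy
  have h1 : ((1 + y) / 2) • lam + ((1 - y) / 2) • (-lam) = lam * y := by
    simp only [smul_eq_mul]
    ring
  have h2 := convexOn_exp.2 (Set.mem_univ lam) (Set.mem_univ (-lam))
    (by linarith : (0:ℝ) ≤ (1 + y) / 2) (by linarith : (0:ℝ) ≤ (1 - y) / 2)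
    (by ring : (1 + y) / 2 + (1 - y) / 2 = 1)
  rw [h1] at h2
  calc Real.exp (lam * y) ≤ (1 + y) / 2 * Real.exp lam + (1 - y) / 2 * Real.exp (-lam) := h2
    _ = Real.cosh lam + y * Real.sinh lam := by
        rw [Real.cosh_eq, Real.sinh_eq]
        ring

/-- One-sided Hoeffding-type tail bound for sums of independent, mean-zero,
`[-1,1]`-valued random variables. -/
lemma hoeff_tail {Ω : Type} [MeasurableSpace Ω] {μ : Measure Ω} [IsProbabilityMeasure μ]
    {L : ℕ} (hL : 0 < L) (Y : Fin L → Ω → ℝ)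
    (hmeas : ∀ l, Measurable (Y l))
    (hindep : iIndepFun Y μ)
    (hbdd : ∀ l, ∀ᵐ ω ∂μ, |Y l ω| ≤ 1)
    (hmean : ∀ l, ∫ ω, Y l ω ∂μ = 0)
    {t : ℝ} (ht : 0 ≤ t) :
    μ {ω | t ≤ ∑ l, Y l ω} ≤ ENNReal.ofReal (Real.exp (-t ^ 2 / (2 * L))) := by
  set lam : ℝ := t / L with hlam
  have hlam0 : 0 ≤ lam := by positivity
  have hint : ∀ l, Integrable (fun ω => Real.exp (lam * Y l ω)) μ := by
    intro l
    refine Integrable.mono' (integrable_const (Real.exp lam))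
      (((hmeas l).const_mul lam).exp.aestronglyMeasurable) ?_
    filter_upwards [hbdd l] with ω h
    rw [Real.norm_eq_abs, abs_of_pos (Real.exp_pos _), Real.exp_le_exp]
    have : Y l ω ≤ 1 := (abs_le.1 h).2
    nlinarith
  have hintY : ∀ l, Integrable (Y l) μ := by
    intro l
    refine Integrable.mono' (integrable_const 1) (hmeas l).aestronglyMeasurable ?_
    filter_upwards [hbdd l] with ω h
    rwa [Real.norm_eq_abs]
  have hmgf : ∀ l, mgf (Y l) μ lam ≤ Real.exp (lam ^ 2 / 2) := by
    intro l
    have hle : mgf (Y l) μ lam ≤ Real.cosh lam := by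
      have hi2 : Integrable (fun ω => Real.cosh lam + Y l ω * Real.sinh lam) μ :=
        (integrable_const _).add ((hintY l).mul_const _)
      have h1 : mgf (Y l) μ lam ≤ ∫ ω, (Real.cosh lam + Y l ω * Real.sinh lam) ∂μ := by
        refine integral_mono_ae (hint l) hi2 ?_
        filter_upwards [hbdd l] with ω h
        exact exp_le_cosh_add h
      have h2 : ∫ ω, (Real.cosh lam + Y l ω * Real.sinh lam) ∂μ = Real.cosh lam := by
        rw [integral_add (integrable_const _) ((hintY l).mul_const _),
          integral_const, integral_mul_const, hmean l]
        simp
      rw [h2] at h1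
      exact h1
    exact hle.trans (Real.cosh_le_exp_half_sq lam)
  have hintsum : Integrable (fun ω => Real.exp (lam * (∑ l, Y l) ω)) μ :=
    hindep.integrable_exp_mul_sum hmeas (fun l _ => hint l)
  have key := measure_ge_le_exp_mul_mgf (X := ∑ l, Y l) (μ := μ) t hlam0 hintsum
  rw [hindep.mgf_sum hmeas] at key
  have hprod : ∏ l : Fin L, mgf (Y l) μ lam ≤ Real.exp (lam ^ 2 / 2) ^ (L : ℕ) := by
    calc ∏ l : Fin L, mgf (Y l) μ lam ≤ ∏ l : Fin L, Real.exp (lam ^ 2 / 2) :=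
          Finset.prod_le_prod (fun l _ => mgf_nonneg) (fun l _ => hmgf l)
      _ = Real.exp (lam ^ 2 / 2) ^ (L : ℕ) := by
          rw [Finset.prod_const, Finset.card_univ, Fintype.card_fin]
  have hbound : Real.exp (-lam * t) * ∏ l : Fin L, mgf (Y l) μ lam
      ≤ Real.exp (-t ^ 2 / (2 * L)) := by
    calc Real.exp (-lam * t) * ∏ l : Fin L, mgf (Y l) μ lam
        ≤ Real.exp (-lam * t) * Real.exp (lam ^ 2 / 2) ^ (L : ℕ) :=
          mul_le_mul_of_nonneg_left hprod (Real.exp_pos _).le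
      _ = Real.exp (-lam * t + L * (lam ^ 2 / 2)) := by
          rw [← Real.exp_nat_mul, ← Real.exp_add]
      _ = Real.exp (-t ^ 2 / (2 * L)) := by
          congr 1
          rw [hlam]
          have hL0 : (L : ℝ) ≠ 0 := Nat.cast_ne_zero.2 hL.ne'
          field_simp
          ring
  have hset : {ω | t ≤ ∑ l, Y l ω} = {ω | t ≤ (∑ l, Y l) ω} := by
    ext ω
    simp [Finset.sum_apply]
  rw [hset]
  have hne : μ {ω | t ≤ (∑ l, Y l) ω} ≠ ⊤ := measure_ne_top _ _
  rw [← ENNReal.ofReal_toReal hne]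
  exact ENNReal.ofReal_le_ofReal (key.trans hbound)

lemma compl_sub_bound {Ω : Type} [MeasurableSpace Ω] {μ : Measure Ω} [IsProbabilityMeasure μ]
    {B T : Set Ω} (hB : MeasurableSet B) {ε : ℝ} (hε : 0 ≤ ε)
    (h : μ B ≤ ENNReal.ofReal ε) (hsub : Bᶜ ⊆ T) :
    ENNReal.ofReal (1 - ε) ≤ μ T := by
  calc ENNReal.ofReal (1 - ε) = 1 - ENNReal.ofReal ε := by
        rw [ENNReal.ofReal_sub 1 hε, ENNReal.ofReal_one]
    _ ≤ 1 - μ B := tsub_le_tsub_left h 1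
    _ = μ Bᶜ := by rw [measure_compl hB (measure_ne_top μ B), measure_univ]
    _ ≤ μ T := measure_mono hsub

lemma arith_A {K : ℕ} (hK : 0 < K) {x : ℝ} (hx : 0 < x)
    (h : (K : ℝ) * Real.exp (-x) < 1) :
    ((K * K + K * (K - 1) : ℕ) : ℝ) * Real.exp (-(10 * x)) ≤ K * Real.exp (-x) := by
  have hKR : (1 : ℝ) ≤ K := Nat.one_le_cast.2 hK
  have hcast : ((K * K + K * (K - 1) : ℕ) : ℝ) = (K : ℝ) * (2 * K - 1) := by
    have h1 : ((K - 1 : ℕ) : ℝ) = (K : ℝ) - 1 := by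
      rw [Nat.cast_sub hK]
      simp
    push_cast [h1]
    ring
  rw [hcast]
  have hsplit : Real.exp (-(10 * x)) = Real.exp (-x) * Real.exp (-(9 * x)) := by
    rw [← Real.exp_add]
    ring_nf
  have key : (2 * (K : ℝ) - 1) * Real.exp (-(9 * x)) ≤ 1 := by
    rcases Nat.lt_or_ge K 2 with h2 | h2
    · -- K = 1
      have hKeq : (K : ℝ) = 1 := by
        have : K = 1 := by omega
        rw [this]; norm_num
      rw [hKeq]
      have : Real.exp (-(9 * x)) ≤ 1 := Real.exp_le_one_iff.2 (by linarith)
      linarith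
    · -- K ≥ 2
      have hK2 : (2 : ℝ) ≤ K := by exact_mod_cast h2
      have hKloe : (K : ℝ) < Real.exp x := by
        have hepos := Real.exp_pos x
        have : Real.exp (-x) = (Real.exp x)⁻¹ := Real.exp_neg x
        rw [this] at h
        calc (K : ℝ) = K * (Real.exp x)⁻¹ * Real.exp x := by field_simp
          _ < 1 * Real.exp x := by
              apply mul_lt_mul_of_pos_right h hepos
          _ = Real.exp x := one_mul _
      have h8 : (2 : ℝ) ≤ Real.exp (8 * x) := by
        have : Real.exp x ≤ Real.exp (8 * x) := Real.exp_le_exp.2 (by linarith)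
        linarith
      have h9 : Real.exp (-(9 * x)) = (Real.exp x)⁻¹ * (Real.exp (8 * x))⁻¹ := by
        rw [← Real.exp_neg, ← Real.exp_neg, ← Real.exp_add]
        ring_nf
      have hepos := Real.exp_pos x
      have he8pos := Real.exp_pos (8 * x)
      calc (2 * (K : ℝ) - 1) * Real.exp (-(9 * x))
          ≤ 2 * Real.exp x * Real.exp (-(9 * x)) := by
            apply mul_le_mul_of_nonneg_right _ (Real.exp_pos _).le
            linarith
        _ = 2 * (Real.exp (8 * x))⁻¹ := by
            rw [h9]
            field_simp
        _ ≤ 1 := by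
            rw [← div_eq_mul_inv, div_le_one he8pos]
            linarith
  calc (K : ℝ) * (2 * K - 1) * Real.exp (-(10 * x))
      = (K : ℝ) * Real.exp (-x) * ((2 * K - 1) * Real.exp (-(9 * x))) := by
        rw [hsplit]; ring
    _ ≤ (K : ℝ) * Real.exp (-x) * 1 := by
        apply mul_le_mul_of_nonneg_left key
        positivity
    _ = (K : ℝ) * Real.exp (-x) := mul_one _

lemma arith_B {K : ℕ} (hK : 0 < K) {x : ℝ} (hx : 0 < x)
    (h : 2 * (K : ℝ) * Real.exp (-x) < 1) :
    ((K * K + K * K : ℕ) : ℝ) * Real.exp (-(10 * x)) ≤ 2 * K * Real.exp (-x) := by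
  have hcast : ((K * K + K * K : ℕ) : ℝ) = 2 * (K : ℝ) * K := by push_cast; ring
  rw [hcast]
  have hsplit : Real.exp (-(10 * x)) = Real.exp (-x) * Real.exp (-(9 * x)) := by
    rw [← Real.exp_add]; ring_nf
  have hepos := Real.exp_pos x
  have hKlt : (K : ℝ) < Real.exp x := by
    have hKR : (1 : ℝ) ≤ K := Nat.one_le_cast.2 hK
    have : Real.exp (-x) = (Real.exp x)⁻¹ := Real.exp_neg x
    rw [this] at h
    calc (K : ℝ) = K * (Real.exp x)⁻¹ * Real.exp x := by field_simp
      _ ≤ 2 * K * (Real.exp x)⁻¹ * Real.exp x := by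
          apply mul_le_mul_of_nonneg_right _ hepos.le
          have hinv : (0:ℝ) ≤ (Real.exp x)⁻¹ := by positivity
          nlinarith
      _ < 1 * Real.exp x := mul_lt_mul_of_pos_right h hepos
      _ = Real.exp x := one_mul _
  have key : (K : ℝ) * Real.exp (-(9 * x)) ≤ 1 := by
    have h9 : Real.exp x ≤ Real.exp (9 * x) := Real.exp_le_exp.2 (by linarith)
    have h9pos := Real.exp_pos (9 * x)
    have : (K : ℝ) < Real.exp (9 * x) := hKlt.trans_le h9
    rw [Real.exp_neg]
    rw [← div_eq_mul_inv, div_le_one h9pos]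
    linarith
  calc 2 * (K : ℝ) * K * Real.exp (-(10 * x))
      = 2 * (K : ℝ) * Real.exp (-x) * ((K : ℝ) * Real.exp (-(9 * x))) := by
        rw [hsplit]; ring
    _ ≤ 2 * (K : ℝ) * Real.exp (-x) * 1 := by
        apply mul_le_mul_of_nonneg_left key
        positivity
    _ = 2 * (K : ℝ) * Real.exp (-x) := mul_one _
/-- Two-sided tail bounds for a sum of independent `[0,1]`-valued random variables. -/
lemma entry_tail {Ω : Type} [MeasurableSpace Ω] {μ : Measure Ω} [IsProbabilityMeasure μ]
    {L : ℕ} (hL : 0 < L) (Z : Fin L → Ω → ℝ)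
    (hmeasZ : ∀ l, Measurable (Z l))
    (hindep : iIndepFun Z μ)
    (hbdd : ∀ l, ∀ᵐ ω ∂μ, 0 ≤ Z l ω ∧ Z l ω ≤ 1)
    {mm : ℝ} (hmm0 : 0 ≤ mm) (hmm1 : mm ≤ 1) (hmean : ∀ l, ∫ ω, Z l ω ∂μ = mm)
    {t : ℝ} (ht : 0 ≤ t) :
    μ {ω | t ≤ (∑ l, Z l ω) - L * mm} ≤ ENNReal.ofReal (Real.exp (-t ^ 2 / (2 * L)))
    ∧ μ {ω | t ≤ L * mm - (∑ l, Z l ω)} ≤ ENNReal.ofReal (Real.exp (-t ^ 2 / (2 * L))) := by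
  have hintZ : ∀ l, Integrable (Z l) μ := by
    intro l
    refine Integrable.mono' (integrable_const 1) (hmeasZ l).aestronglyMeasurable ?_
    filter_upwards [hbdd l] with ω h
    rw [Real.norm_eq_abs, abs_le]
    constructor <;> linarith [h.1, h.2]
  have hsum : ∀ ω, ∑ l, (Z l ω - mm) = (∑ l, Z l ω) - L * mm := by
    intro ω
    rw [Finset.sum_sub_distrib, Finset.sum_const, Finset.card_univ, Fintype.card_fin,
      nsmul_eq_mul]
  have hsum' : ∀ ω, ∑ l, (mm - Z l ω) = L * mm - ∑ l, Z l ω := by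
    intro ω
    rw [Finset.sum_sub_distrib, Finset.sum_const, Finset.card_univ, Fintype.card_fin,
      nsmul_eq_mul]
  constructor
  · have h1 : μ {ω | t ≤ ∑ l, (Z l ω - mm)} ≤ ENNReal.ofReal (Real.exp (-t ^ 2 / (2 * L))) := by
      refine hoeff_tail hL (fun l ω => Z l ω - mm) (fun l => (hmeasZ l).sub_const mm) ?_ ?_ ?_ ht
      · exact hindep.comp (fun _ => fun y : ℝ => y - mm)
          (fun _ => measurable_id.sub_const mm)
      · intro l
        filter_upwards [hbdd l] with ω h
        rw [abs_le]
        constructor <;> linarith [h.1, h.2]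
      · intro l
        rw [integral_sub (hintZ l) (integrable_const mm), hmean l, integral_const]
        simp
    have : {ω | t ≤ ∑ l, (Z l ω - mm)} = {ω | t ≤ (∑ l, Z l ω) - L * mm} := by
      ext ω
      rw [Set.mem_setOf_eq, Set.mem_setOf_eq, hsum ω]
    rwa [this] at h1
  · have h1 : μ {ω | t ≤ ∑ l, (mm - Z l ω)} ≤ ENNReal.ofReal (Real.exp (-t ^ 2 / (2 * L))) := by
      refine hoeff_tail hL (fun l ω => mm - Z l ω) (fun l => (measurable_const.sub (hmeasZ l))) ?_ ?_ ?_ ht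
      · exact hindep.comp (fun _ => fun y : ℝ => mm - y)
          (fun _ => measurable_const.sub measurable_id)
      · intro l
        filter_upwards [hbdd l] with ω h
        rw [abs_le]
        constructor <;> linarith [h.1, h.2]
      · intro l
        rw [integral_sub (integrable_const mm) (hintZ l), hmean l, integral_const]
        simp
    have : {ω | t ≤ ∑ l, (mm - Z l ω)} = {ω | t ≤ L * mm - ∑ l, Z l ω} := by
      ext ω
      rw [Set.mem_setOf_eq, Set.mem_setOf_eq, hsum' ω]
    rwa [this] at h1
/-- Union bound for the "selected" bad event (all lower deviations, plus
off-diagonal upper deviations). -/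
lemma union_bound_sel {Ω : Type} [MeasurableSpace Ω] (μ : Measure Ω) {K : ℕ} (δ : ENNReal)
    (B1 B2 : Fin K → Fin K → Set Ω)
    (h1 : ∀ k k', μ (B1 k k') ≤ δ) (h2 : ∀ k k', μ (B2 k k') ≤ δ) :
    μ ((⋃ k, ⋃ k', B1 k k') ∪ (⋃ k, ⋃ k', if k = k' then (∅ : Set Ω) else B2 k k'))
      ≤ ((K * K + K * (K - 1) : ℕ) : ENNReal) * δ := by
  classical
  have hA : μ (⋃ k, ⋃ k', B1 k k') ≤ ((K * K : ℕ) : ENNReal) * δ := by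
    calc μ (⋃ k, ⋃ k', B1 k k') ≤ ∑' k : Fin K, μ (⋃ k', B1 k k') := measure_iUnion_le _
      _ = ∑ k : Fin K, μ (⋃ k', B1 k k') := tsum_fintype _
      _ ≤ ∑ k : Fin K, ∑ k' : Fin K, μ (B1 k k') := by
          refine Finset.sum_le_sum fun k _ => ?_
          calc μ (⋃ k', B1 k k') ≤ ∑' k' : Fin K, μ (B1 k k') := measure_iUnion_le _
            _ = ∑ k' : Fin K, μ (B1 k k') := tsum_fintype _
      _ ≤ ∑ _k : Fin K, ∑ _k' : Fin K, δ :=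
          Finset.sum_le_sum fun k _ => Finset.sum_le_sum fun k' _ => h1 k k'
      _ = ((K * K : ℕ) : ENNReal) * δ := by
          simp [Finset.sum_const, Finset.card_univ, mul_assoc]
  have hB : μ (⋃ k, ⋃ k', if k = k' then (∅ : Set Ω) else B2 k k')
      ≤ ((K * (K - 1) : ℕ) : ENNReal) * δ := by
    have hinner : ∀ k : Fin K, ∑ k' : Fin K, μ (if k = k' then (∅ : Set Ω) else B2 k k')
        ≤ ((K - 1 : ℕ) : ENNReal) * δ := by
      intro k
      rw [← Finset.add_sum_erase Finset.univ _ (Finset.mem_univ k)]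
      rw [if_pos rfl, measure_empty, zero_add]
      calc ∑ k' ∈ Finset.univ.erase k, μ (if k = k' then (∅ : Set Ω) else B2 k k')
          ≤ ∑ _k' ∈ Finset.univ.erase k, δ := by
            refine Finset.sum_le_sum fun k' hk' => ?_
            rw [if_neg fun h => (Finset.ne_of_mem_erase hk') h.symm]
            exact h2 k k'
        _ = ((K - 1 : ℕ) : ENNReal) * δ := by
            rw [Finset.sum_const, Finset.card_erase_of_mem (Finset.mem_univ k),
              Finset.card_univ, Fintype.card_fin, nsmul_eq_mul]
    calc μ (⋃ k, ⋃ k', if k = k' then (∅ : Set Ω) else B2 k k')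
        ≤ ∑' k : Fin K, μ (⋃ k', if k = k' then (∅ : Set Ω) else B2 k k') :=
          measure_iUnion_le _
      _ = ∑ k : Fin K, μ (⋃ k', if k = k' then (∅ : Set Ω) else B2 k k') := tsum_fintype _
      _ ≤ ∑ k : Fin K, ((K - 1 : ℕ) : ENNReal) * δ := by
          refine Finset.sum_le_sum fun k _ => ?_
          calc μ (⋃ k', if k = k' then (∅ : Set Ω) else B2 k k')
              ≤ ∑' k' : Fin K, μ (if k = k' then (∅ : Set Ω) else B2 k k') :=
                measure_iUnion_le _
            _ = ∑ k' : Fin K, μ (if k = k' then (∅ : Set Ω) else B2 k k') := tsum_fintype _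
            _ ≤ ((K - 1 : ℕ) : ENNReal) * δ := hinner k
      _ = ((K * (K - 1) : ℕ) : ENNReal) * δ := by
          rw [Finset.sum_const, Finset.card_univ, Fintype.card_fin, nsmul_eq_mul]
          push_cast
          ring
  calc μ (_ ∪ _) ≤ _ + _ := measure_union_le _ _
    _ ≤ ((K * K : ℕ) : ENNReal) * δ + ((K * (K - 1) : ℕ) : ENNReal) * δ := add_le_add hA hB
    _ = ((K * K + K * (K - 1) : ℕ) : ENNReal) * δ := by
        push_cast
        ring

lemma union_bound_all {Ω : Type} [MeasurableSpace Ω] (μ : Measure Ω) {K : ℕ} (δ : ENNReal)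
    (B1 B2 : Fin K → Fin K → Set Ω)
    (h1 : ∀ k k', μ (B1 k k') ≤ δ) (h2 : ∀ k k', μ (B2 k k') ≤ δ) :
    μ ((⋃ k, ⋃ k', B1 k k') ∪ (⋃ k, ⋃ k', B2 k k'))
      ≤ ((K * K + K * K : ℕ) : ENNReal) * δ := by
  have hA : ∀ (B : Fin K → Fin K → Set Ω), (∀ k k', μ (B k k') ≤ δ) →
      μ (⋃ k, ⋃ k', B k k') ≤ ((K * K : ℕ) : ENNReal) * δ := by
    intro B hB
    calc μ (⋃ k, ⋃ k', B k k') ≤ ∑' k : Fin K, μ (⋃ k', B k k') := measure_iUnion_le _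
      _ = ∑ k : Fin K, μ (⋃ k', B k k') := tsum_fintype _
      _ ≤ ∑ k : Fin K, ∑ k' : Fin K, μ (B k k') := by
          refine Finset.sum_le_sum fun k _ => ?_
          calc μ (⋃ k', B k k') ≤ ∑' k' : Fin K, μ (B k k') := measure_iUnion_le _
            _ = ∑ k' : Fin K, μ (B k k') := tsum_fintype _
      _ ≤ ∑ _k : Fin K, ∑ _k' : Fin K, δ :=
          Finset.sum_le_sum fun k _ => Finset.sum_le_sum fun k' _ => hB k k'
      _ = ((K * K : ℕ) : ENNReal) * δ := by
          simp [Finset.sum_const, Finset.card_univ, mul_assoc]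
  calc μ (_ ∪ _) ≤ _ + _ := measure_union_le _ _
    _ ≤ ((K * K : ℕ) : ENNReal) * δ + ((K * K : ℕ) : ENNReal) * δ :=
        add_le_add (hA B1 h1) (hA B2 h2)
    _ = ((K * K + K * K : ℕ) : ENNReal) * δ := by
        push_cast
        ring

lemma sing_lower {LM K : ℕ} (hK : 0 < K) (A : Matrix (Fin LM) (Fin K) ℝ)
    (S : Fin K → Fin K → ℝ) (hS : ∀ k k', S k k' = ∑ i, A i k * A i k')
    (La C t : ℝ) (hLa : 0 ≤ La) (ht : 0 ≤ t)
    (hdiag : ∀ k, -t ≤ S k k - (La + C))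
    (hoff : ∀ k k', k ≠ k' → |S k k' - La| ≤ t)
    {β : ℝ} (hβ : 0 ≤ β) (hβle : β ≤ C - K * t) :
    β ≤ singVal A K ^ 2 ∧ Real.sqrt β ≤ singVal A K := by
  have h : ∀ x : Fin K → ℝ, β * ∑ j, x j ^ 2 ≤ ∑ i, (A.mulVec x i) ^ 2 := by
    intro x
    rw [quad_identity]
    have h1 := quad_lower S La C t hLa ht hdiag hoff x
    have h2 : β * ∑ j, x j ^ 2 ≤ (C - K * t) * ∑ j, x j ^ 2 :=
      mul_le_mul_of_nonneg_right hβle (by positivity)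
    have h3 : ∑ k, ∑ k', x k * x k' * S k k'
        = ∑ k, ∑ k', x k * x k' * ∑ i, A i k * A i k' := by
      refine Finset.sum_congr rfl fun k _ => Finset.sum_congr rfl fun k' _ => ?_
      rw [hS]
    rw [h3] at h1
    linarith
  have hmain := le_singVal_full hK A hβ h
  exact ⟨hmain.2, hmain.1⟩

lemma sing_upper {LM K : ℕ} (hK : 0 < K) (A : Matrix (Fin LM) (Fin K) ℝ)
    (S : Fin K → Fin K → ℝ) (hS : ∀ k k', S k k' = ∑ i, A i k * A i k')
    (La C t : ℝ) (hLa : 0 ≤ La) (ht : 0 ≤ t)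
    (hdiag : ∀ k, S k k - (La + C) ≤ t)
    (hoff : ∀ k k', k ≠ k' → |S k k' - La| ≤ t)
    {γ : ℝ} (hγ : 0 ≤ γ) (hγge : La * K + C + K * t ≤ γ) :
    singVal A 1 ^ 2 ≤ γ := by
  have h : ∀ x : Fin K → ℝ, ∑ i, (A.mulVec x i) ^ 2 ≤ γ * ∑ j, x j ^ 2 := by
    intro x
    rw [quad_identity]
    have h1 := quad_upper S La C t hLa ht hdiag hoff x
    have h2 : (La * K + C + K * t) * ∑ j, x j ^ 2 ≤ γ * ∑ j, x j ^ 2 :=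
      mul_le_mul_of_nonneg_right hγge (by positivity)
    have h3 : ∑ k, ∑ k', x k * x k' * S k k'
        = ∑ k, ∑ k', x k * x k' * ∑ i, A i k * A i k' := by
      refine Finset.sum_congr rfl fun k _ => Finset.sum_congr rfl fun k' _ => ?_
      rw [hS]
    rw [h3] at h1
    linarith
  exact singVal_one_sq_le hK A hγ h
set_option maxHeartbeats 1000000 in
/-- singular values of a stack of independent random stochastic blocks;
abstracted Dirichlet-prior lemma. -/
theorem stmt17 (L M K : ℕ) (hL : 0 < L) (hM : 0 < M) (hK : 0 < K)
    (Ω : Type) (_ : MeasurableSpace Ω) (μ : Measure Ω) (_ : IsProbabilityMeasure μ)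
    (Θl : Fin L → Ω → Matrix (Fin M) (Fin K) ℝ)
    (hmeas : ∀ l c k, Measurable fun ω => Θl l ω c k)
    -- the blocks Θ₁, …, Θ_L are mutually independent
    (hindep : iIndepFun
      (fun l : Fin L => fun ω => (fun c k => Θl l ω c k : Fin M → Fin K → ℝ)) μ)
    -- almost surely, every column of every block lies in the probability simplex
    (hsimplex : ∀ᵐ ω ∂μ, ∀ (l : Fin L) (k : Fin K),
      (∀ c, 0 ≤ Θl l ω c k) ∧ ∑ c, Θl l ω c k = 1)
    (a c₁ c₂ : ℝ) (ha0 : 0 ≤ a) (ha1 : a ≤ 1) (hc₁0 : 0 < c₁) (hc₁1 : c₁ < 1)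
    (hc₂ : c₂ = K * a + c₁)
    -- second-moment identity `E[(Θ_l)ᵀ·Θ_l] = a·1·1ᵀ + c₁·I`
    (hmom : ∀ (l : Fin L) (k k' : Fin K),
      ∫ ω, ((Θl l ω)ᵀ * Θl l ω) k k' ∂μ = a + if k = k' then c₁ else 0)
    -- `Th` is the vertical stack of the blocks Θ₁, …, Θ_L
    (Th : Ω → Matrix (Fin (L * M)) (Fin K) ℝ)
    (hTh : ∀ ω (i : Fin (L * M)) (k : Fin K),
      Th ω i k = Θl (finProdFinEquiv.symm i).1 ω (finProdFinEquiv.symm i).2 k) :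
    ENNReal.ofReal (1 - K * Real.exp (-(c₁ ^ 2 * L / (80 * K ^ 2)))) ≤
        μ {ω | c₁ * L / 2 ≤ singVal (Th ω) K ^ 2} ∧
    ENNReal.ofReal (1 - K * Real.exp (-(c₁ ^ 2 * L / (80 * K ^ 2)))) ≤
        μ {ω | singVal (Th ω) 1 ^ 2 ≤ 3 * c₂ * L / 2} ∧
    ENNReal.ofReal (1 - 2 * K * Real.exp (-(c₁ ^ 2 * L / (80 * K ^ 2)))) ≤
        μ {ω | 0 < singVal (Th ω) K ∧
            singVal (Th ω) 1 ^ 2 / singVal (Th ω) K ^ 2 ≤ 3 * c₂ / c₁} := by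
  classical
  have hKR : (0:ℝ) < K := by exact_mod_cast hK
  have hLR : (0:ℝ) < L := by exact_mod_cast hL
  -- abbreviations (inline): x = exponent, t = deviation threshold
  -- x := c₁ ^ 2 * L / (80 * K ^ 2),  t := c₁ * L / (2 * K)
  have hx : (0:ℝ) < c₁ ^ 2 * L / (80 * K ^ 2) := by positivity
  have ht : (0:ℝ) ≤ c₁ * L / (2 * K) := by positivity
  -- measurability / boundedness / mean of the Gram entries
  have hmeasf : ∀ (l : Fin L) (k k' : Fin K),
      Measurable (fun ω => ∑ c, Θl l ω c k * Θl l ω c k') := fun l k k' =>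
    Finset.measurable_sum _ fun c _ => (hmeas l c k).mul (hmeas l c k')
  have hfbdd : ∀ (l : Fin L) (k k' : Fin K), ∀ᵐ ω ∂μ,
      0 ≤ (∑ c, Θl l ω c k * Θl l ω c k') ∧ (∑ c, Θl l ω c k * Θl l ω c k') ≤ 1 := by
    intro l k k'
    filter_upwards [hsimplex] with ω hω
    obtain ⟨hpos, hsum⟩ := hω l k
    obtain ⟨hpos', hsum'⟩ := hω l k'
    refine ⟨Finset.sum_nonneg fun c _ => mul_nonneg (hpos c) (hpos' c), ?_⟩
    calc ∑ c, Θl l ω c k * Θl l ω c k' ≤ ∑ c, Θl l ω c k := by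
          refine Finset.sum_le_sum fun c _ => ?_
          have h1 : Θl l ω c k' ≤ 1 := by
            rw [← hsum']
            exact Finset.single_le_sum (f := fun c => Θl l ω c k')
              (fun c _ => hpos' c) (Finset.mem_univ c)
          exact mul_le_of_le_one_right (hpos c) h1
      _ = 1 := hsum
  have hintf : ∀ (l : Fin L) (k k' : Fin K),
      Integrable (fun ω => ∑ c, Θl l ω c k * Θl l ω c k') μ := by
    intro l k k'
    refine Integrable.mono' (integrable_const 1) (hmeasf l k k').aestronglyMeasurable ?_
    filter_upwards [hfbdd l k k'] with ω h
    rw [Real.norm_eq_abs, abs_le]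
    exact ⟨by linarith [h.1], h.2⟩
  have hmom' : ∀ (l : Fin L) (k k' : Fin K),
      ∫ ω, (∑ c, Θl l ω c k * Θl l ω c k') ∂μ = a + if k = k' then c₁ else 0 := by
    intro l k k'
    have h := hmom l k k'
    simp only [Matrix.mul_apply, Matrix.transpose_apply] at h
    exact h
  have hac1 : a + c₁ ≤ 1 := by
    have h1 : ∫ ω, (∑ c, Θl ⟨0, hL⟩ ω c ⟨0, hK⟩ * Θl ⟨0, hL⟩ ω c ⟨0, hK⟩) ∂μ = a + c₁ := by
      rw [hmom' ⟨0, hL⟩ ⟨0, hK⟩ ⟨0, hK⟩, if_pos rfl]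
    have h2 : ∫ ω, (∑ c, Θl ⟨0, hL⟩ ω c ⟨0, hK⟩ * Θl ⟨0, hL⟩ ω c ⟨0, hK⟩) ∂μ
        ≤ ∫ _ω, (1:ℝ) ∂μ := by
      refine integral_mono_ae (hintf _ _ _) (integrable_const 1) ?_
      filter_upwards [hfbdd ⟨0, hL⟩ ⟨0, hK⟩ ⟨0, hK⟩] with ω h using h.2
    rw [h1] at h2
    simpa using h2
  have hm0 : ∀ k k' : Fin K, (0:ℝ) ≤ a + if k = k' then c₁ else 0 := by
    intro k k'
    split <;> linarith
  have hm1 : ∀ k k' : Fin K, (a + if k = k' then c₁ else 0) ≤ 1 := by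
    intro k k'
    split <;> linarith
  have hindepf : ∀ k k' : Fin K, iIndepFun
      (fun l => fun ω => ∑ c, Θl l ω c k * Θl l ω c k') μ := by
    intro k k'
    exact hindep.comp (fun _ : Fin L => fun A : Fin M → Fin K → ℝ => ∑ c, A c k * A c k')
      (fun _ => Finset.measurable_sum _ fun c _ => by fun_prop)
  -- exponent computation
  have hLK : -(c₁ * L / (2 * K)) ^ 2 / (2 * (L:ℝ)) = -(10 * (c₁ ^ 2 * L / (80 * K ^ 2))) := by
    field_simp
    ring
  -- the two-sided tail bounds for each Gram entry
  have htail : ∀ k k' : Fin K,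
      μ {ω | c₁ * L / (2 * K) ≤ (∑ l, ∑ c, Θl l ω c k * Θl l ω c k')
          - L * (a + if k = k' then c₁ else 0)}
        ≤ ENNReal.ofReal (Real.exp (-(10 * (c₁ ^ 2 * L / (80 * K ^ 2)))))
      ∧ μ {ω | c₁ * L / (2 * K) ≤ L * (a + if k = k' then c₁ else 0)
          - (∑ l, ∑ c, Θl l ω c k * Θl l ω c k')}
        ≤ ENNReal.ofReal (Real.exp (-(10 * (c₁ ^ 2 * L / (80 * K ^ 2)))))  := by
    intro k k'
    have h := entry_tail hL (fun l ω => ∑ c, Θl l ω c k * Θl l ω c k')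
      (fun l => hmeasf l k k') (hindepf k k') (fun l => hfbdd l k k')
      (hm0 k k') (hm1 k k') (fun l => hmom' l k k') ht
    rw [hLK] at h
    exact h
    -- Gram-matrix identity relating the stack `Th` to the blocks
  have hGram : ∀ ω (k k' : Fin K),
      (∑ l, ∑ c, Θl l ω c k * Θl l ω c k') = ∑ i, Th ω i k * Th ω i k' := by
    intro ω k k'
    have h1 : ∑ p : Fin L × Fin M, Θl p.1 ω p.2 k * Θl p.1 ω p.2 k'
        = ∑ l, ∑ c, Θl l ω c k * Θl l ω c k' := by
      rw [Fintype.sum_prod_type]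
    rw [← h1]
    exact (Fintype.sum_equiv finProdFinEquiv.symm _ _
      (fun i => by rw [hTh ω i k, hTh ω i k'])).symm
  have hmeasS : ∀ k k' : Fin K,
      Measurable (fun ω => ∑ l, ∑ c, Θl l ω c k * Θl l ω c k') := fun k k' =>
    Finset.measurable_sum _ fun l _ => hmeasf l k k'
  have hmLo : ∀ k k' : Fin K, MeasurableSet {ω | c₁ * L / (2 * K) ≤
      L * (a + if k = k' then c₁ else 0) - (∑ l, ∑ c, Θl l ω c k * Θl l ω c k')} :=
    fun k k' => measurableSet_le measurable_const (measurable_const.sub (hmeasS k k'))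
  have hmHi : ∀ k k' : Fin K, MeasurableSet {ω | c₁ * L / (2 * K) ≤
      (∑ l, ∑ c, Θl l ω c k * Θl l ω c k') - L * (a + if k = k' then c₁ else 0)} :=
    fun k k' => measurableSet_le measurable_const ((hmeasS k k').sub measurable_const)
  have hKt : (K:ℝ) * (c₁ * L / (2 * K)) = c₁ * L / 2 := by
    field_simp
  have hc₂0 : 0 < c₂ := by
    have : (0:ℝ) ≤ (K:ℝ) * a := mul_nonneg hKR.le ha0
    rw [hc₂]
    linarith
  have hc₁c₂ : c₁ ≤ c₂ := by
    have : (0:ℝ) ≤ (K:ℝ) * a := mul_nonneg hKR.le ha0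
    rw [hc₂]
    linarith
  -- deterministic conclusions from the good events
  have hlow : ∀ ω : Ω,
      (∀ k : Fin K, L * (a + c₁) - (∑ l, ∑ c, Θl l ω c k * Θl l ω c k) < c₁ * L / (2 * K)) →
      (∀ k k' : Fin K, k ≠ k' →
        |(∑ l, ∑ c, Θl l ω c k * Θl l ω c k') - L * a| ≤ c₁ * L / (2 * K)) →
      c₁ * L / 2 ≤ singVal (Th ω) K ^ 2 ∧ Real.sqrt (c₁ * L / 2) ≤ singVal (Th ω) K := by
    intro ω hdiag hoff
    refine sing_lower hK (Th ω) (fun k k' => ∑ l, ∑ c, Θl l ω c k * Θl l ω c k')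
      (fun k k' => hGram ω k k') (L * a) (L * c₁) (c₁ * L / (2 * K))
      (by positivity) ht ?_ hoff (by positivity) ?_
    · intro k
      have h := hdiag k
      nlinarith
    · nlinarith [hKt]
  have hhigh : ∀ ω : Ω,
      (∀ k : Fin K, (∑ l, ∑ c, Θl l ω c k * Θl l ω c k) - L * (a + c₁) < c₁ * L / (2 * K)) →
      (∀ k k' : Fin K, k ≠ k' →
        |(∑ l, ∑ c, Θl l ω c k * Θl l ω c k') - L * a| ≤ c₁ * L / (2 * K)) →
      singVal (Th ω) 1 ^ 2 ≤ 3 * c₂ * L / 2 := by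
    intro ω hdiag hoff
    refine sing_upper hK (Th ω) (fun k k' => ∑ l, ∑ c, Θl l ω c k * Θl l ω c k')
      (fun k k' => hGram ω k k') (L * a) (L * c₁) (c₁ * L / (2 * K))
      (by positivity) ht ?_ hoff ?_ ?_
    · intro k
      have h := hdiag k
      nlinarith
    · positivity
    · have h1 : L * a * K + L * c₁ = L * c₂ := by rw [hc₂]; ring
      nlinarith [hKt, mul_nonneg (mul_nonneg hKR.le ha0) hLR.le, hLR.le]
  -- Statement (i)
  have part1 : ENNReal.ofReal (1 - K * Real.exp (-(c₁ ^ 2 * L / (80 * K ^ 2)))) ≤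
      μ {ω | c₁ * L / 2 ≤ singVal (Th ω) K ^ 2} := by
    by_cases hcase : 1 - (K:ℝ) * Real.exp (-(c₁ ^ 2 * L / (80 * K ^ 2))) ≤ 0
    · rw [ENNReal.ofReal_of_nonpos hcase]
      exact zero_le
    · push_neg at hcase
      have hKe : (K:ℝ) * Real.exp (-(c₁ ^ 2 * L / (80 * K ^ 2))) < 1 := by linarith
      refine compl_sub_bound (B :=
          (⋃ k, ⋃ k', {ω | c₁ * L / (2 * K) ≤
            L * (a + if k = k' then c₁ else 0) - (∑ l, ∑ c, Θl l ω c k * Θl l ω c k')})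
          ∪ (⋃ k, ⋃ k', if k = k' then (∅ : Set Ω) else {ω | c₁ * L / (2 * K) ≤
            (∑ l, ∑ c, Θl l ω c k * Θl l ω c k') - L * (a + if k = k' then c₁ else 0)}))
        ?_ (by positivity) ?_ ?_
      · refine MeasurableSet.union (MeasurableSet.iUnion fun k => MeasurableSet.iUnion
          fun k' => hmLo k k') (MeasurableSet.iUnion fun k => MeasurableSet.iUnion fun k' => ?_)
        split_ifs
        · exact MeasurableSet.empty
        · exact measurableSet_le measurable_const ((hmeasS k k').sub measurable_const)
      · refine le_trans (union_bound_sel μ _ _ _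
          (fun k k' => (htail k k').2) (fun k k' => (htail k k').1)) ?_
        rw [← ENNReal.ofReal_natCast, ← ENNReal.ofReal_mul (by positivity)]
        exact ENNReal.ofReal_le_ofReal (arith_A hK hx hKe)
      · intro ω hω
        simp only [Set.mem_compl_iff, Set.mem_union, not_or, Set.mem_iUnion, not_exists,
          Set.mem_setOf_eq, not_le] at hω
        obtain ⟨h1, h2⟩ := hω
        refine (hlow ω ?_ ?_).1
        · intro k
          have h := h1 k k
          rw [if_pos rfl] at h
          linarith
        · intro k k' hne
          have ha' := h1 k k'
          have hb' := h2 k k'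
          simp only [if_neg hne, Set.mem_setOf_eq, not_le] at ha' hb'
          rw [abs_le]
          constructor <;> [linarith; linarith]
  -- Statement (ii)
  have part2 : ENNReal.ofReal (1 - K * Real.exp (-(c₁ ^ 2 * L / (80 * K ^ 2)))) ≤
      μ {ω | singVal (Th ω) 1 ^ 2 ≤ 3 * c₂ * L / 2} := by
    by_cases hcase : 1 - (K:ℝ) * Real.exp (-(c₁ ^ 2 * L / (80 * K ^ 2))) ≤ 0
    · rw [ENNReal.ofReal_of_nonpos hcase]
      exact zero_le
    · push_neg at hcase
      have hKe : (K:ℝ) * Real.exp (-(c₁ ^ 2 * L / (80 * K ^ 2))) < 1 := by linarith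
      refine compl_sub_bound (B :=
          (⋃ k, ⋃ k', {ω | c₁ * L / (2 * K) ≤
            (∑ l, ∑ c, Θl l ω c k * Θl l ω c k') - L * (a + if k = k' then c₁ else 0)})
          ∪ (⋃ k, ⋃ k', if k = k' then (∅ : Set Ω) else {ω | c₁ * L / (2 * K) ≤
            L * (a + if k = k' then c₁ else 0) - (∑ l, ∑ c, Θl l ω c k * Θl l ω c k')}))
        ?_ (by positivity) ?_ ?_
      · refine MeasurableSet.union (MeasurableSet.iUnion fun k => MeasurableSet.iUnion
          fun k' => hmHi k k') (MeasurableSet.iUnion fun k => MeasurableSet.iUnion fun k' => ?_)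
        split_ifs
        · exact MeasurableSet.empty
        · exact measurableSet_le measurable_const (measurable_const.sub (hmeasS k k'))
      · refine le_trans (union_bound_sel μ _ _ _
          (fun k k' => (htail k k').1) (fun k k' => (htail k k').2)) ?_
        rw [← ENNReal.ofReal_natCast, ← ENNReal.ofReal_mul (by positivity)]
        exact ENNReal.ofReal_le_ofReal (arith_A hK hx hKe)
      · intro ω hω
        simp only [Set.mem_compl_iff, Set.mem_union, not_or, Set.mem_iUnion, not_exists,
          Set.mem_setOf_eq, not_le] at hω
        obtain ⟨h1, h2⟩ := hω
        refine hhigh ω ?_ ?_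
        · intro k
          have h := h1 k k
          rw [if_pos rfl] at h
          linarith
        · intro k k' hne
          have ha' := h1 k k'
          have hb' := h2 k k'
          simp only [if_neg hne, Set.mem_setOf_eq, not_le] at ha' hb'
          rw [abs_le]
          constructor <;> [linarith; linarith]
  -- Statement (iii)
  have part3 : ENNReal.ofReal (1 - 2 * K * Real.exp (-(c₁ ^ 2 * L / (80 * K ^ 2)))) ≤
      μ {ω | 0 < singVal (Th ω) K ∧
          singVal (Th ω) 1 ^ 2 / singVal (Th ω) K ^ 2 ≤ 3 * c₂ / c₁} := by
    by_cases hcase : 1 - 2 * (K:ℝ) * Real.exp (-(c₁ ^ 2 * L / (80 * K ^ 2))) ≤ 0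
    · rw [ENNReal.ofReal_of_nonpos hcase]
      exact zero_le
    · push_neg at hcase
      have hKe : 2 * (K:ℝ) * Real.exp (-(c₁ ^ 2 * L / (80 * K ^ 2))) < 1 := by linarith
      refine compl_sub_bound (B :=
          (⋃ k, ⋃ k', {ω | c₁ * L / (2 * K) ≤
            L * (a + if k = k' then c₁ else 0) - (∑ l, ∑ c, Θl l ω c k * Θl l ω c k')})
          ∪ (⋃ k, ⋃ k', {ω | c₁ * L / (2 * K) ≤
            (∑ l, ∑ c, Θl l ω c k * Θl l ω c k') - L * (a + if k = k' then c₁ else 0)}))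
        ?_ (by positivity) ?_ ?_
      · exact MeasurableSet.union
          (MeasurableSet.iUnion fun k => MeasurableSet.iUnion fun k' => hmLo k k')
          (MeasurableSet.iUnion fun k => MeasurableSet.iUnion fun k' => hmHi k k')
      · refine le_trans (union_bound_all μ _ _ _
          (fun k k' => (htail k k').2) (fun k k' => (htail k k').1)) ?_
        rw [← ENNReal.ofReal_natCast, ← ENNReal.ofReal_mul (by positivity)]
        exact ENNReal.ofReal_le_ofReal (arith_B hK hx hKe)
      · intro ω hω
        simp only [Set.mem_compl_iff, Set.mem_union, not_or, Set.mem_iUnion, not_exists,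
          Set.mem_setOf_eq, not_le] at hω
        obtain ⟨h1, h2⟩ := hω
        have hoff : ∀ k k' : Fin K, k ≠ k' →
            |(∑ l, ∑ c, Θl l ω c k * Θl l ω c k') - L * a| ≤ c₁ * L / (2 * K) := by
          intro k k' hne
          have ha' := h1 k k'
          have hb' := h2 k k'
          simp only [if_neg hne] at ha' hb'
          rw [abs_le]
          constructor <;> [linarith; linarith]
        have hlo := hlow ω (fun k => by have h := h1 k k; rw [if_pos rfl] at h; linarith) hoff
        have hhi := hhigh ω (fun k => by have h := h2 k k; rw [if_pos rfl] at h; linarith) hoff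
        have hβpos : (0:ℝ) < c₁ * L / 2 := by positivity
        have hsing_pos : 0 < singVal (Th ω) K :=
          lt_of_lt_of_le (Real.sqrt_pos.2 hβpos) hlo.2
        refine ⟨hsing_pos, ?_⟩
        have hdiv : singVal (Th ω) 1 ^ 2 / singVal (Th ω) K ^ 2
            ≤ (3 * c₂ * L / 2) / (c₁ * L / 2) :=
          div_le_div₀ (by positivity) hhi hβpos hlo.1
        have heq : (3 * c₂ * (L:ℝ) / 2) / (c₁ * L / 2) = 3 * c₂ / c₁ := by
          have hL0 : (L:ℝ) ≠ 0 := hLR.ne'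
          have hc0 : c₁ ≠ 0 := hc₁0.ne'
          field_simp
        rw [heq] at hdiv
        exact hdiv
  exact ⟨part1, part2, part3⟩
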